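/- Consider the Exp4 algorithm run for K rounds with p arms, N ≥ 2 experts, exploration parameter γ ∈ (0,1], and integer batch size b with 1 ≤ b ≤ p. The adversary fixes rewards d^k_j with 0 ≤ d^k_j ≤ D for all rounds k ∈ {1,…,K} and arms j ∈ {1,…,p}, and each expert n provides deterministic advice vectors e^{k,n} ∈ bΔ^p; expert 1 is the uniform expert, e^{k,1}_j = b/p for all k, j. On a probability space, random subsets I_1,…,I_K ⊆ {1,…,p} are drawn so that, conditionally on (I_1,…,I_{k−1}), P[j ∈ I_k] = π^k_j almost surely, where the (random) weights and probabilities follow the Exp4 recursion: w_{1,n} = 1, W_k = Σ_{n=1}^N w_{k,n}, π^k_j = (1−γ) Σ_{n=1}^N (w_{k,n}/W_k) e^{k,n}_j + γb/p, d̂^k_j = (d^k_j/π^k_j)·1[j ∈ I_k], and w_{k+1,n} = w_{k,n} exp(γ (Σ_{j=1}^p e^{k,n}_j d̂^k_j)/p). Assume additionally that γ (Σ_{j=1}^p e^{k,n}_j d̂^k_j)/p ≤ 1 holds almost surely for every k and n (this holds, e.g., when D ≤ 1). Define C^{K,n} = Σ_{k=1}^K Σ_{j=1}^p e^{k,n}_j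 d^k_j and the expected regret R^K = max_{n=1,…,N} C^{K,n} − E[Σ_{k=1}^K Σ_{j∈I_k} d^k_j]. Then R^K ≤ ((e−2)bD + 1) γ max_{n=1,…,N} C^{K,n} + (p ln N)/γ. -/

import Mathlib

open MeasureTheory Finset Nat

lemma exp_quad_bound {x : ℝ} (h0 : 0 ≤ x) (h1 : x ≤ 1) :
    Real.exp x ≤ 1 + x + (Real.exp 1 - 2) * x ^ 2 := by
  have hsum : ∀ t : ℝ, Real.exp t = ∑' n : ℕ, t ^ n / n ! := by
    intro t
    rw [Real.exp_eq_exp_ℝ, NormedSpace.exp_eq_tsum_div]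
  have hs : ∀ t : ℝ, Summable (fun n : ℕ => t ^ n / n !) := fun t =>
    Real.summable_pow_div_factorial t
  have hsplit : ∀ t : ℝ, Real.exp t = 1 + t + ∑' n : ℕ, t ^ (n + 2) / (n + 2)! := by
    intro t
    rw [hsum t, ← (hs t).sum_add_tsum_nat_add 2]
    norm_num [Finset.sum_range_succ]
  have hs2 : ∀ t : ℝ, Summable (fun n : ℕ => t ^ (n + 2) / ((n + 2)! : ℝ)) := by
    intro t
    exact (hs t).comp_injective (add_left_injective 2)
  have hmono : ∑' n : ℕ, x ^ (n + 2) / (n + 2)! ≤ ∑' n : ℕ, x ^ 2 / (n + 2)! := by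
    refine Summable.tsum_le_tsum (fun n => ?_) (hs2 x) ?_
    · exact div_le_div_of_nonneg_right (pow_le_pow_of_le_one h0 h1 (by omega)) (by positivity)
    · have hsm : Summable (fun n : ℕ => x ^ 2 * ((1:ℝ) ^ (n + 2) / ((n + 2)! : ℝ))) :=
        (hs2 1).mul_left _
      exact hsm.congr (fun n => by simp [div_eq_mul_inv])
  have h1e : ∑' n : ℕ, (1:ℝ) / ((n + 2)! : ℝ) = Real.exp 1 - 2 := by
    have := hsplit 1
    simp only [one_pow] at this
    linarith
  have heq : ∑' n : ℕ, x ^ 2 / ((n + 2)! : ℝ) = (Real.exp 1 - 2) * x ^ 2 := by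
    calc ∑' n : ℕ, x ^ 2 / ((n + 2)! : ℝ) = x ^ 2 * ∑' n : ℕ, 1 / ((n + 2)! : ℝ) := by
          rw [← tsum_mul_left]; congr 1; ext n; ring
      _ = (Real.exp 1 - 2) * x ^ 2 := by rw [h1e]; ring
  calc Real.exp x = 1 + x + ∑' n : ℕ, x ^ (n + 2) / (n + 2)! := hsplit x
    _ ≤ 1 + x + ∑' n : ℕ, x ^ 2 / (n + 2)! := by linarith
    _ = 1 + x + (Real.exp 1 - 2) * x ^ 2 := by rw [heq]

/-- The sigma-algebra generated by rounds `i < m` of the Exp4 algorithm. -/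
def exp4M {Ω : Type*} {K p : ℕ} (I : Fin K → Ω → Finset (Fin p)) (m : ℕ) :
    MeasurableSpace Ω :=
  ⨆ (i : Fin K) (_ : (i : ℕ) < m) (j' : Fin p),
    MeasurableSpace.comap (fun ω => decide (j' ∈ I i ω)) ⊤

lemma exp4M_mono {Ω : Type*} {K p : ℕ} (I : Fin K → Ω → Finset (Fin p)) :
    Monotone (exp4M I) := by
  intro a b hab
  refine iSup_mono fun i => ?_
  exact iSup_le fun h => le_iSup_of_le (lt_of_lt_of_le h hab) le_rfl

lemma exp4M_le {Ω : Type*} [m0 : MeasurableSpace Ω] {K p : ℕ}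
    (I : Fin K → Ω → Finset (Fin p))
    (hImeas : ∀ k j, MeasurableSet {ω | j ∈ I k ω}) (m : ℕ) :
    exp4M I m ≤ m0 := by
  refine iSup_le fun i => iSup_le fun _ => iSup_le fun j => ?_
  rw [← measurable_iff_comap_le]
  refine measurable_to_countable' fun b => ?_
  rcases Bool.dichotomy b with hb | hb <;> subst hb
  · have : (fun ω => decide (j ∈ I i ω)) ⁻¹' {false} = {ω | j ∈ I i ω}ᶜ := by
      ext ω; simp
    rw [this]; exact (hImeas i j).compl
  · have : (fun ω => decide (j ∈ I i ω)) ⁻¹' {true} = {ω | j ∈ I i ω} := by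
      ext ω; simp
    rw [this]; exact hImeas i j

lemma exp4_indicator_meas {Ω : Type*} {K p : ℕ} (I : Fin K → Ω → Finset (Fin p))
    (i : Fin K) (j : Fin p) :
    Measurable[MeasurableSpace.comap (fun ω => decide (j ∈ I i ω)) ⊤]
      (fun ω => if j ∈ I i ω then (1 : ℝ) else 0) := by
  have hδ : Measurable[MeasurableSpace.comap (fun ω => decide (j ∈ I i ω)) ⊤]
      (fun ω => decide (j ∈ I i ω)) := by
    rw [measurable_iff_comap_le]
    exact MeasurableSpace.comap_mono le_top
  have hg : Measurable[⊤] (fun b : Bool => if b then (1 : ℝ) else 0) :=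
    measurable_from_top
  have : (fun ω => if j ∈ I i ω then (1 : ℝ) else 0)
      = (fun b : Bool => if b then (1 : ℝ) else 0) ∘ (fun ω => decide (j ∈ I i ω)) := by
    funext ω; by_cases h : j ∈ I i ω <;> simp [h]
  rw [this]
  exact hg.comp hδ

lemma exp4_rescale {γ pr lN L S T c bD : ℝ} (hγ0 : 0 < γ) (h1γ : 0 < 1 - γ) (hp : 0 < pr)
    (h : (γ / pr) * L ≤ lN + (γ / (pr * (1 - γ))) * S + c * (γ / pr) ^ 2 * (bD / (1 - γ)) * T) :
    (1 - γ) * L ≤ (1 - γ) * (pr * lN / γ) + S + c * (γ / pr) * bD * T := by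
  have hsc := mul_le_mul_of_nonneg_left h
    (le_of_lt (show (0:ℝ) < pr * (1 - γ) / γ by positivity))
  have e1 : (pr * (1 - γ) / γ) * ((γ / pr) * L) = (1 - γ) * L := by
    field_simp
  have e2 : (pr * (1 - γ) / γ) * (lN + (γ / (pr * (1 - γ))) * S
      + c * (γ / pr) ^ 2 * (bD / (1 - γ)) * T)
      = (1 - γ) * (pr * lN / γ) + S + c * (γ / pr) * bD * T := by
    field_simp
  rw [e1, e2] at hsc
  exact hsc

set_option maxHeartbeats 1000000 in
theorem exp4_expected_regret_bound
    {Ω : Type*} [MeasurableSpace Ω] (μ : Measure Ω) [IsProbabilityMeasure μ]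
    (p N K : ℕ) (hp : 0 < p) (hN : 2 ≤ N) (hK : 0 < K)
    (γ : ℝ) (hγ : γ ∈ Set.Ioc (0 : ℝ) 1)
    (b : ℕ) (hb : 1 ≤ b) (hbp : b ≤ p)
    (D : ℝ)
    (d : Fin K → Fin p → ℝ) (hd : ∀ k j, d k j ∈ Set.Icc (0 : ℝ) D)
    (e : Fin K → Fin N → Fin p → ℝ)
    (he0 : ∀ k n j, 0 ≤ e k n j)
    (hesum : ∀ k n, ∑ j, e k n j = (b : ℝ))
    (huniform : ∀ k j, e k ⟨0, by omega⟩ j = (b : ℝ) / p)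
    (I : Fin K → Ω → Finset (Fin p))
    (hImeas : ∀ k j, MeasurableSet {ω | j ∈ I k ω})
    (w : ℕ → Fin N → Ω → ℝ)
    (W : ℕ → Ω → ℝ)
    (π : Fin K → Fin p → Ω → ℝ)
    (dhat : Fin K → Fin p → Ω → ℝ)
    (y : Fin K → Fin N → Ω → ℝ)
    (hw0 : ∀ n ω, w 0 n ω = 1)
    (hW : ∀ k ω, W k ω = ∑ n, w k n ω)
    (hπ : ∀ (k : Fin K) (j : Fin p) (ω : Ω),
      π k j ω = (1 - γ) * (∑ n, (w k n ω / W k ω) * e k n j) + γ * b / p)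
    (hdhat : ∀ (k : Fin K) (j : Fin p) (ω : Ω),
      dhat k j ω = if j ∈ I k ω then d k j / π k j ω else 0)
    (hy : ∀ (k : Fin K) (n : Fin N) (ω : Ω), y k n ω = ∑ j, e k n j * dhat k j ω)
    (hwrec : ∀ (k : Fin K) (n : Fin N) (ω : Ω),
      w ((k : ℕ) + 1) n ω = w k n ω * Real.exp (γ * y k n ω / p))
    (hbound : ∀ᵐ ω ∂μ, ∀ (k : Fin K) (n : Fin N), γ * y k n ω / p ≤ 1)
    (hcond : ∀ (k : Fin K) (j : Fin p),
      μ[(fun ω => if j ∈ I k ω then (1 : ℝ) else 0) |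
          ⨆ (i : Fin K) (_ : (i : ℕ) < (k : ℕ)) (j' : Fin p),
            MeasurableSpace.comap (fun ω => decide (j' ∈ I i ω)) ⊤]
        =ᵐ[μ] fun ω => π k j ω) :
    (⨆ n : Fin N, ∑ k, ∑ j, e k n j * d k j)
        - ∫ ω, (∑ k, ∑ j ∈ I k ω, d k j) ∂μ
      ≤ ((Real.exp 1 - 2) * b * D + 1) * γ * (⨆ n : Fin N, ∑ k, ∑ j, e k n j * d k j)
          + p * Real.log N / γ := by
  obtain ⟨hγ0, hγ1⟩ := hγ
  haveI : Nonempty (Fin N) := ⟨⟨0, by omega⟩⟩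
  have hp' : (0 : ℝ) < p := by exact_mod_cast hp
  have hb' : (0 : ℝ) < b := by exact_mod_cast hb
  have hN' : (1 : ℝ) ≤ N := by exact_mod_cast Nat.one_le_of_lt hN
  have hd0 : ∀ k j, 0 ≤ d k j := fun k j => (hd k j).1
  have hdD : ∀ k j, d k j ≤ D := fun k j => (hd k j).2
  have hD : 0 ≤ D := le_trans (hd0 ⟨0, hK⟩ ⟨0, hp⟩) (hdD ⟨0, hK⟩ ⟨0, hp⟩)
  have he2 : (0 : ℝ) ≤ Real.exp 1 - 2 := by nlinarith [Real.add_one_le_exp (1 : ℝ)]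
  have hlogN : 0 ≤ Real.log N := Real.log_nonneg hN'
  set C : Fin N → ℝ := fun n => ∑ k, ∑ j, e k n j * d k j with hCdef
  set G : ℝ := ∫ ω, (∑ k, ∑ j ∈ I k ω, d k j) ∂μ with hGdef
  have hCnonneg : ∀ n, 0 ≤ C n := fun n =>
    Finset.sum_nonneg fun k _ => Finset.sum_nonneg fun j _ =>
      mul_nonneg (he0 k n j) (hd0 k j)
  have hCle : ∀ n, C n ≤ ⨆ n, C n := fun n =>
    le_ciSup (Set.Finite.bddAbove (Set.finite_range C)) n
  have hCs0 : 0 ≤ ⨆ n, C n := le_trans (hCnonneg ⟨0, by omega⟩) (hCle ⟨0, by omega⟩)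
  have hG0 : 0 ≤ G := by
    rw [hGdef]
    exact integral_nonneg fun ω =>
      Finset.sum_nonneg fun k _ => Finset.sum_nonneg fun j _ => hd0 k j
  -- pointwise positivity
  have hwpos : ∀ ω, ∀ m, m ≤ K → ∀ n, 0 < w m n ω := by
    intro ω m
    induction m with
    | zero => intro _ n; rw [hw0]; norm_num
    | succ m ih =>
      intro hm n
      have hmK : m < K := hm
      have := hwrec ⟨m, hmK⟩ n ω
      simp only at this
      rw [this]
      exact mul_pos (ih (le_of_lt hmK) n) (Real.exp_pos _)
  have hWpos : ∀ ω, ∀ m, m ≤ K → 0 < W m ω := by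
    intro ω m hm
    rw [hW]
    exact Finset.sum_pos (fun n _ => hwpos ω m hm n) univ_nonempty
  have hπlb : ∀ (k : Fin K) (j : Fin p) ω, γ * b / p ≤ π k j ω := by
    intro k j ω
    rw [hπ]
    have : 0 ≤ (1 - γ) * ∑ n, w k n ω / W k ω * e k n j := by
      apply mul_nonneg (by linarith)
      exact Finset.sum_nonneg fun n _ => mul_nonneg
        (div_nonneg (hwpos ω k k.2.le n).le (hWpos ω k k.2.le).le) (he0 k n j)
    linarith
  have hπpos : ∀ (k : Fin K) (j : Fin p) ω, 0 < π k j ω := fun k j ω =>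
    lt_of_lt_of_le (by positivity) (hπlb k j ω)
  have hdhat0 : ∀ (k : Fin K) (j : Fin p) ω, 0 ≤ dhat k j ω := by
    intro k j ω; rw [hdhat]
    split
    · exact div_nonneg (hd0 k j) (hπpos k j ω).le
    · exact le_rfl
  have hdhatle : ∀ (k : Fin K) (j : Fin p) ω, dhat k j ω ≤ D * p / (γ * b) := by
    intro k j ω; rw [hdhat]
    have hpos : (0:ℝ) < γ * b / p := by positivity
    split
    · calc d k j / π k j ω ≤ D / (γ * b / p) := by
            apply div_le_div₀ hD (hdD k j) hpos (hπlb k j ω)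
        _ = D * p / (γ * b) := by field_simp
    · positivity
  have hy0 : ∀ (k : Fin K) (n : Fin N) ω, 0 ≤ y k n ω := by
    intro k n ω; rw [hy]
    exact Finset.sum_nonneg fun j _ => mul_nonneg (he0 k n j) (hdhat0 k j ω)
  have hπdhat : ∀ (k : Fin K) (j : Fin p) ω,
      π k j ω * dhat k j ω = if j ∈ I k ω then d k j else 0 := by
    intro k j ω; rw [hdhat]
    split
    · exact mul_div_cancel₀ _ (hπpos k j ω).ne'
    · exact mul_zero _
  -- measurability
  have hπMeasAux : ∀ (k : Fin K) (j : Fin p),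
      (∀ n : Fin N, Measurable[exp4M I (k : ℕ)] (w (k : ℕ) n)) →
      Measurable[exp4M I (k : ℕ)] (π k j) := by
    intro k j hwm
    have hπeq : π k j = fun ω =>
        (1 - γ) * (∑ n, (w (k : ℕ) n ω / W (k : ℕ) ω) * e k n j) + γ * b / p :=
      funext fun ω => hπ k j ω
    rw [hπeq]
    have hWm : Measurable[exp4M I (k : ℕ)] (W (k : ℕ)) := by
      have : W (k : ℕ) = fun ω => ∑ n, w (k : ℕ) n ω := funext fun ω => hW _ ω
      rw [this]
      exact Finset.measurable_sum _ fun n _ => hwm n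
    have : Measurable[exp4M I (k : ℕ)]
        (fun ω => ∑ n, (w (k : ℕ) n ω / W (k : ℕ) ω) * e k n j) :=
      Finset.measurable_sum _ fun n _ => ((hwm n).div hWm).mul_const _
    exact (this.const_mul _).add_const _
  have hwMeas : ∀ m : ℕ, m ≤ K → ∀ n : Fin N, Measurable[exp4M I m] (w m n) := by
    intro m
    induction m with
    | zero =>
      intro _ n
      have : w 0 n = fun _ => (1:ℝ) := funext fun ω => hw0 n ω
      rw [this]; exact measurable_const
    | succ m ih =>
      intro hm n
      have hmK : m < K := hm
      set k : Fin K := ⟨m, hmK⟩ with hk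
      have hmono : exp4M I m ≤ exp4M I (m + 1) := exp4M_mono I (Nat.le_succ m)
      have hwm : ∀ n, Measurable[exp4M I m] (w m n) := ih hmK.le
      have hπm : ∀ j, Measurable[exp4M I (m + 1)] (π k j) := fun j =>
        ((hπMeasAux k j hwm).mono hmono le_rfl)
      have hιm : ∀ j : Fin p, Measurable[exp4M I (m + 1)]
          (fun ω => if j ∈ I k ω then (1:ℝ) else 0) := by
        intro j
        refine (exp4_indicator_meas I k j).mono ?_ le_rfl
        refine le_iSup_of_le k (le_iSup_of_le ?_ (le_iSup_of_le j le_rfl))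
        · exact Nat.lt_succ_self m
      have hdm : ∀ j : Fin p, Measurable[exp4M I (m + 1)] (dhat k j) := by
        intro j
        have : dhat k j = fun ω =>
            (if j ∈ I k ω then (1:ℝ) else 0) * (d k j / π k j ω) := by
          funext ω; rw [hdhat]; split <;> simp
        rw [this]
        exact (hιm j).mul (measurable_const.div (hπm j))
      have hym : Measurable[exp4M I (m + 1)] (y k n) := by
        have : y k n = fun ω => ∑ j, e k n j * dhat k j ω := funext fun ω => hy k n ω
        rw [this]
        exact Finset.measurable_sum _ fun j _ => (hdm j).const_mul _
      have : w (m + 1) n = fun ω => w m n ω * Real.exp (γ * y k n ω / p) :=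
        funext fun ω => hwrec k n ω
      rw [this]
      exact ((hwm n).mono hmono le_rfl).mul
        (Real.measurable_exp.comp ((hym.const_mul γ).div_const _))
  have hπMeas : ∀ (k : Fin K) (j : Fin p), Measurable[exp4M I (k : ℕ)] (π k j) :=
    fun k j => hπMeasAux k j (hwMeas (k : ℕ) k.2.le)
  -- expectation of dhat
  -- m0-measurability of dhat
  have hdhatMeas : ∀ (k : Fin K) (j : Fin p), Measurable (dhat k j) := by
    intro k j
    have hπ0 : Measurable (π k j) := (hπMeas k j).mono (exp4M_le I hImeas _) le_rfl
    have : dhat k j = fun ω => if j ∈ I k ω then d k j / π k j ω else 0 :=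
      funext fun ω => hdhat k j ω
    rw [this]
    exact Measurable.ite (hImeas k j) (measurable_const.div hπ0) measurable_const
  have hdhat_int : ∀ (k : Fin K) (j : Fin p),
      Integrable (dhat k j) μ ∧ ∫ ω, dhat k j ω ∂μ = d k j := by
    intro k j
    have hle : exp4M I (k : ℕ) ≤ ‹MeasurableSpace Ω› := exp4M_le I hImeas _
    haveI : SigmaFinite (μ.trim hle) := inferInstance
    set f : Ω → ℝ := fun ω => d k j / π k j ω with hf
    set g : Ω → ℝ := fun ω => if j ∈ I k ω then (1:ℝ) else 0 with hg
    have hfg : f * g = dhat k j := by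
      funext ω
      rw [Pi.mul_apply, hdhat]
      by_cases h : j ∈ I k ω <;> simp [hf, hg, h]
    have hfsm : StronglyMeasurable[exp4M I (k : ℕ)] f :=
      (measurable_const.div (hπMeas k j)).stronglyMeasurable
    have hgmeas : Measurable g := by
      exact Measurable.ite (hImeas k j) measurable_const measurable_const
    have hgint : Integrable g μ := by
      refine (integrable_const (1:ℝ)).mono' hgmeas.aestronglyMeasurable ?_
      refine ae_of_all _ fun ω => ?_
      by_cases h : j ∈ I k ω <;> simp [hg, h]
    have hfgint : Integrable (f * g) μ := by
      rw [hfg]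
      refine (integrable_const (D * p / (γ * b))).mono'
        (hdhatMeas k j).aestronglyMeasurable ?_
      refine ae_of_all _ fun ω => ?_
      rw [Real.norm_eq_abs, abs_of_nonneg (hdhat0 k j ω)]
      exact hdhatle k j ω
    have hint : Integrable (dhat k j) μ := hfg ▸ hfgint
    refine ⟨hint, ?_⟩
    have hpull : μ[f * g | exp4M I (k : ℕ)] =ᵐ[μ] f * μ[g | exp4M I (k : ℕ)] :=
      condExp_mul_of_stronglyMeasurable_left hfsm hfgint hgint
    have hcd : μ[g | exp4M I (k : ℕ)] =ᵐ[μ] fun ω => π k j ω := hcond k j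
    have hconst : f * (fun ω => π k j ω) = fun _ => d k j := by
      funext ω
      rw [Pi.mul_apply, hf]
      exact div_mul_cancel₀ _ (hπpos k j ω).ne'
    calc ∫ ω, dhat k j ω ∂μ = ∫ ω, (f * g) ω ∂μ := by rw [hfg]
      _ = ∫ ω, (μ[f * g | exp4M I (k : ℕ)]) ω ∂μ := (integral_condExp hle).symm
      _ = ∫ ω, (f * (fun ω => π k j ω)) ω ∂μ := by
          refine integral_congr_ae ?_
          filter_upwards [hpull, hcd] with ω h1 h2
          rw [h1, Pi.mul_apply, Pi.mul_apply, h2]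
      _ = ∫ _ω, d k j ∂μ := by rw [hconst]
      _ = d k j := by simp
  -- integrability and integral of y
  have hy_int : ∀ (k : Fin K) (n : Fin N),
      Integrable (y k n) μ ∧ ∫ ω, y k n ω ∂μ = ∑ j, e k n j * d k j := by
    intro k n
    have hyeq : y k n = fun ω => ∑ j, e k n j * dhat k j ω := funext fun ω => hy k n ω
    have hterm : ∀ j : Fin p, Integrable (fun ω => e k n j * dhat k j ω) μ :=
      fun j => (hdhat_int k j).1.const_mul _
    constructor
    · rw [hyeq]; exact integrable_finset_sum _ fun j _ => hterm j
    · rw [hyeq, integral_finset_sum _ fun j _ => hterm j]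
      refine Finset.sum_congr rfl fun j _ => ?_
      rw [integral_const_mul (e k n j) (dhat k j), (hdhat_int k j).2]
  -- main per-expert bound
  -- S and T functions
  set Sf : Fin K → Ω → ℝ := fun k ω => ∑ j, if j ∈ I k ω then d k j else 0 with hSfdef
  set Tf : Fin K → Ω → ℝ := fun k ω => ∑ j, dhat k j ω with hTfdef
  have hSint : ∀ k : Fin K, Integrable (Sf k) μ := by
    intro k
    have hm : Measurable (Sf k) :=
      Finset.measurable_sum _ fun j _ =>
        Measurable.ite (hImeas k j) measurable_const measurable_const
    refine (integrable_const ((p : ℝ) * D)).mono' hm.aestronglyMeasurable ?_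
    refine ae_of_all _ fun ω => ?_
    rw [Real.norm_eq_abs, abs_of_nonneg (Finset.sum_nonneg fun j _ => by
      by_cases h : j ∈ I k ω <;> simp [h, hd0 k j])]
    calc (∑ j, if j ∈ I k ω then d k j else 0) ≤ ∑ _j : Fin p, D := by
          refine Finset.sum_le_sum fun j _ => ?_
          split
          · exact hdD k j
          · exact hD
      _ = p * D := by simp [mul_comm]
  have hTint : ∀ k : Fin K, Integrable (Tf k) μ :=
    fun k => integrable_finset_sum _ fun j _ => (hdhat_int k j).1
  have hTval : ∀ k : Fin K, ∫ ω, Tf k ω ∂μ = ∑ j, d k j := by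
    intro k
    simp only [hTfdef]
    rw [integral_finset_sum _ fun j _ => (hdhat_int k j).1]
    exact Finset.sum_congr rfl fun j _ => (hdhat_int k j).2
  have hGval : ∫ ω, (∑ k, Sf k ω) ∂μ = G := by
    rw [hGdef]
    congr 1
    funext ω
    refine Finset.sum_congr rfl fun k _ => ?_
    simp only [hSfdef, Finset.sum_ite_mem, Finset.univ_inter]
  have main : ∀ n : Fin N,
      C n ≤ ((Real.exp 1 - 2) * b * D + 1) * γ * iSup C
            + p * Real.log N / γ + G := by
    intro n
    rcases eq_or_lt_of_le hγ1 with hγeq | hγlt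
    · -- trivial case γ = 1
      subst hγeq
      have h1 : 0 ≤ (Real.exp 1 - 2) * b * D * iSup C :=
        mul_nonneg (mul_nonneg (mul_nonneg he2 hb'.le) hD) hCs0
      have h2 : 0 ≤ p * Real.log N / 1 := by positivity
      have := hCle n
      nlinarith [hG0]
    -- main case γ < 1
    have h1γ : 0 < 1 - γ := by linarith
    have hγne : γ ≠ 0 := hγ0.ne'
    have h1γne : (1 : ℝ) - γ ≠ 0 := h1γ.ne'
    have hpne : (p : ℝ) ≠ 0 := hp'.ne'
    -- a.e. pointwise inequality
    have key : ∀ᵐ ω ∂μ, (1 - γ) * ∑ k, y k n ω ≤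
        (1 - γ) * (p * Real.log N / γ) + (∑ k, Sf k ω)
          + (Real.exp 1 - 2) * (γ / p) * (b * D) * ∑ k, Tf k ω := by
      filter_upwards [hbound] with ω hbω
      set A : Fin K → ℝ := fun k => ∑ n', (w k n' ω / W k ω) * y k n' ω with hAdef
      set B : Fin K → ℝ := fun k => ∑ n', (w k n' ω / W k ω) * (y k n' ω) ^ 2 with hBdef
      have hq0 : ∀ (k : Fin K) (n' : Fin N), 0 ≤ w (k : ℕ) n' ω / W (k : ℕ) ω :=
        fun k n' => div_nonneg (hwpos ω k k.2.le n').le (hWpos ω k k.2.le).le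
      have hA0 : ∀ k, 0 ≤ A k := fun k =>
        Finset.sum_nonneg fun n' _ => mul_nonneg (hq0 k n') (hy0 k n' ω)
      have hB0 : ∀ k, 0 ≤ B k := fun k =>
        Finset.sum_nonneg fun n' _ => mul_nonneg (hq0 k n') (sq_nonneg _)
      -- sum of q * e bounded by π / (1 - γ)
      have hqe : ∀ (k : Fin K) (j : Fin p),
          (∑ n', (w (k : ℕ) n' ω / W (k : ℕ) ω) * e k n' j) ≤ π k j ω / (1 - γ) := by
        intro k j
        rw [le_div_iff₀ h1γ]
        have := hπ k j ω
        have hγb : 0 ≤ γ * b / p := by positivity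
        nlinarith [this]
      -- single step bound
      have step : ∀ k : Fin K, W ((k : ℕ) + 1) ω ≤
          W (k : ℕ) ω * (1 + ((γ / p) * A k + (Real.exp 1 - 2) * (γ / p) ^ 2 * B k)) := by
        intro k
        have hWne : W (k : ℕ) ω ≠ 0 := (hWpos ω k k.2.le).ne'
        have hA' : W (k : ℕ) ω * A k = ∑ n', w (k : ℕ) n' ω * y k n' ω := by
          rw [hAdef, Finset.mul_sum]
          refine Finset.sum_congr rfl fun n' _ => ?_
          field_simp [hWne]
        have hB' : W (k : ℕ) ω * B k = ∑ n', w (k : ℕ) n' ω * (y k n' ω) ^ 2 := by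
          rw [hBdef, Finset.mul_sum]
          refine Finset.sum_congr rfl fun n' _ => ?_
          field_simp [hWne]
        calc W ((k : ℕ) + 1) ω = ∑ n', w (k : ℕ) n' ω * Real.exp (γ * y k n' ω / p) := by
              rw [hW]; exact Finset.sum_congr rfl fun n' _ => hwrec k n' ω
          _ ≤ ∑ n', w (k : ℕ) n' ω *
              (1 + γ * y k n' ω / p + (Real.exp 1 - 2) * (γ * y k n' ω / p) ^ 2) := by
              refine Finset.sum_le_sum fun n' _ => ?_
              refine mul_le_mul_of_nonneg_left ?_ (hwpos ω k k.2.le n').le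
              exact exp_quad_bound (by exact div_nonneg (mul_nonneg hγ0.le (hy0 k n' ω)) hp'.le) (hbω k n')
          _ = W (k : ℕ) ω + (γ / p) * (∑ n', w (k : ℕ) n' ω * y k n' ω)
              + (Real.exp 1 - 2) * (γ / p) ^ 2 * (∑ n', w (k : ℕ) n' ω * (y k n' ω) ^ 2) := by
              rw [hW, Finset.mul_sum, Finset.mul_sum, ← Finset.sum_add_distrib,
                ← Finset.sum_add_distrib]
              refine Finset.sum_congr rfl fun n' _ => ?_
              ring
          _ = W (k : ℕ) ω * (1 + ((γ / p) * A k + (Real.exp 1 - 2) * (γ / p) ^ 2 * B k)) := by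
              rw [← hA', ← hB']; ring
      -- telescoping upper bound
      set v : ℕ → ℝ := fun m =>
        if h : m < K then (γ / p) * A ⟨m, h⟩ + (Real.exp 1 - 2) * (γ / p) ^ 2 * B ⟨m, h⟩
        else 0 with hvdef
      have hv0 : ∀ m, 0 ≤ v m := by
        intro m
        simp only [hvdef]
        split
        · have := hA0 ⟨m, by assumption⟩
          have := hB0 ⟨m, by assumption⟩
          positivity
        · exact le_rfl
      have hup : ∀ m, m ≤ K → W m ω ≤ N * Real.exp (∑ i ∈ Finset.range m, v i) := by
        intro m
        induction m with
        | zero =>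
          intro _
          rw [hW]
          simp [hw0]
        | succ m ih =>
          intro hm
          have hmK : m < K := hm
          have hvm : v m = (γ / p) * A ⟨m, hmK⟩
              + (Real.exp 1 - 2) * (γ / p) ^ 2 * B ⟨m, hmK⟩ := dif_pos hmK
          have hstep := step ⟨m, hmK⟩
          calc W (m + 1) ω ≤ W m ω * (1 + v m) := by rw [hvm]; exact hstep
            _ ≤ (N * Real.exp (∑ i ∈ Finset.range m, v i)) * (1 + v m) := by
                refine mul_le_mul_of_nonneg_right (ih hmK.le) ?_
                have := hv0 m; linarith
            _ ≤ (N * Real.exp (∑ i ∈ Finset.range m, v i)) * Real.exp (v m) := by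
                refine mul_le_mul_of_nonneg_left ?_ (by positivity)
                linarith [Real.add_one_le_exp (v m)]
            _ = N * Real.exp (∑ i ∈ Finset.range (m + 1), v i) := by
                rw [Finset.sum_range_succ, Real.exp_add]; ring
      -- lower bound
      set u : ℕ → ℝ := fun m =>
        if h : m < K then γ * y ⟨m, h⟩ n ω / p else 0 with hudef
      have hlow : ∀ m, m ≤ K → w m n ω = Real.exp (∑ i ∈ Finset.range m, u i) := by
        intro m
        induction m with
        | zero => intro _; simp [hw0]
        | succ m ih =>
          intro hm
          have hmK : m < K := hm
          have hum : u m = γ * y ⟨m, hmK⟩ n ω / p := dif_pos hmK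
          rw [hwrec ⟨m, hmK⟩ n ω, ih hmK.le, Finset.sum_range_succ, Real.exp_add, hum]
      have hwW : w K n ω ≤ W K ω := by
        rw [hW]
        exact Finset.single_le_sum (fun i _ => (hwpos ω K le_rfl i).le) (Finset.mem_univ n)
      -- log inequality
      have hlogle : ∑ i ∈ Finset.range K, u i ≤ Real.log N + ∑ i ∈ Finset.range K, v i := by
        have h1 : Real.exp (∑ i ∈ Finset.range K, u i) ≤
            N * Real.exp (∑ i ∈ Finset.range K, v i) := by
          rw [← hlow K le_rfl]
          exact hwW.trans (hup K le_rfl)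
        have h2 := Real.log_le_log (Real.exp_pos _) h1
        rwa [Real.log_exp, Real.log_mul (by positivity) (Real.exp_ne_zero _),
          Real.log_exp] at h2
      -- convert to Fin sums
      have hu_sum : ∑ i ∈ Finset.range K, u i = (γ / p) * ∑ k : Fin K, y k n ω := by
        rw [← Fin.sum_univ_eq_sum_range u K, Finset.mul_sum]
        refine Finset.sum_congr rfl fun k _ => ?_
        simp only [hudef]
        rw [dif_pos k.2]
        simp only [Fin.eta]
        ring
      have hv_sum : ∑ i ∈ Finset.range K, v i =
          ∑ k : Fin K, ((γ / p) * A k + (Real.exp 1 - 2) * (γ / p) ^ 2 * B k) := by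
        rw [← Fin.sum_univ_eq_sum_range v K]
        refine Finset.sum_congr rfl fun k _ => ?_
        simp only [hvdef]
        rw [dif_pos k.2]
      -- bounds on A and B
      have hπdsum : ∀ k : Fin K, (∑ j, π k j ω * dhat k j ω) = Sf k ω := by
        intro k
        rw [hSfdef]
        exact Finset.sum_congr rfl fun j _ => hπdhat k j ω
      have hAb : ∀ k : Fin K, A k ≤ Sf k ω / (1 - γ) := by
        intro k
        have hswap : A k = ∑ j, (∑ n', (w (k : ℕ) n' ω / W (k : ℕ) ω) * e k n' j)
            * dhat k j ω := by
          rw [hAdef]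
          calc (∑ n', (w (k : ℕ) n' ω / W (k : ℕ) ω) * y k n' ω)
              = ∑ n', ∑ j, (w (k : ℕ) n' ω / W (k : ℕ) ω) * (e k n' j * dhat k j ω) := by
                refine Finset.sum_congr rfl fun n' _ => ?_
                rw [hy, Finset.mul_sum]
            _ = ∑ j, ∑ n', (w (k : ℕ) n' ω / W (k : ℕ) ω) * (e k n' j * dhat k j ω) :=
                Finset.sum_comm
            _ = ∑ j, (∑ n', (w (k : ℕ) n' ω / W (k : ℕ) ω) * e k n' j) * dhat k j ω := by
                refine Finset.sum_congr rfl fun j _ => ?_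
                rw [Finset.sum_mul]
                exact Finset.sum_congr rfl fun n' _ => by ring
        rw [hswap, ← hπdsum k, Finset.sum_div]
        refine Finset.sum_le_sum fun j _ => ?_
        calc (∑ n', (w (k : ℕ) n' ω / W (k : ℕ) ω) * e k n' j) * dhat k j ω
            ≤ (π k j ω / (1 - γ)) * dhat k j ω :=
              mul_le_mul_of_nonneg_right (hqe k j) (hdhat0 k j ω)
          _ = π k j ω * dhat k j ω / (1 - γ) := by ring
      have hBb : ∀ k : Fin K, B k ≤ (b * D / (1 - γ)) * Tf k ω := by
        intro k
        have hcs : ∀ n' : Fin N, (y k n' ω) ^ 2 ≤ b * ∑ j, e k n' j * (dhat k j ω) ^ 2 := by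
          intro n'
          have h := Finset.sum_mul_sq_le_sq_mul_sq Finset.univ
            (fun j => Real.sqrt (e k n' j)) (fun j => Real.sqrt (e k n' j) * dhat k j ω)
          have h1 : ∀ j : Fin p, Real.sqrt (e k n' j) * (Real.sqrt (e k n' j) * dhat k j ω)
              = e k n' j * dhat k j ω := by
            intro j
            rw [← mul_assoc, Real.mul_self_sqrt (he0 k n' j)]
          have h2 : ∀ j : Fin p, Real.sqrt (e k n' j) ^ 2 = e k n' j :=
            fun j => Real.sq_sqrt (he0 k n' j)
          have h3 : ∀ j : Fin p, (Real.sqrt (e k n' j) * dhat k j ω) ^ 2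
              = e k n' j * (dhat k j ω) ^ 2 := by
            intro j
            rw [mul_pow, h2 j]
          rw [Finset.sum_congr rfl fun j _ => h1 j, Finset.sum_congr rfl fun j _ => h2 j,
            Finset.sum_congr rfl fun j _ => h3 j, hesum k n'] at h
          rw [hy]
          exact h
        calc B k ≤ ∑ n', (w (k : ℕ) n' ω / W (k : ℕ) ω)
              * (b * ∑ j, e k n' j * (dhat k j ω) ^ 2) := by
              rw [hBdef]
              exact Finset.sum_le_sum fun n' _ =>
                mul_le_mul_of_nonneg_left (hcs n') (hq0 k n')
          _ = b * ∑ j, (∑ n', (w (k : ℕ) n' ω / W (k : ℕ) ω) * e k n' j)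
              * (dhat k j ω) ^ 2 := by
              rw [Finset.mul_sum]
              calc (∑ n', (w (k : ℕ) n' ω / W (k : ℕ) ω)
                    * (b * ∑ j, e k n' j * (dhat k j ω) ^ 2))
                  = ∑ n', ∑ j, b * ((w (k : ℕ) n' ω / W (k : ℕ) ω)
                      * (e k n' j * (dhat k j ω) ^ 2)) := by
                    refine Finset.sum_congr rfl fun n' _ => ?_
                    rw [Finset.mul_sum, Finset.mul_sum]
                    exact Finset.sum_congr rfl fun j _ => by ring
                _ = ∑ j, ∑ n', b * ((w (k : ℕ) n' ω / W (k : ℕ) ω)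
                      * (e k n' j * (dhat k j ω) ^ 2)) := Finset.sum_comm
                _ = ∑ j, b * ((∑ n', (w (k : ℕ) n' ω / W (k : ℕ) ω) * e k n' j)
                      * (dhat k j ω) ^ 2) := by
                    refine Finset.sum_congr rfl fun j _ => ?_
                    rw [Finset.sum_mul, Finset.mul_sum]
                    exact Finset.sum_congr rfl fun n' _ => by ring
          _ ≤ b * ∑ j, (π k j ω / (1 - γ)) * (dhat k j ω) ^ 2 := by
              refine mul_le_mul_of_nonneg_left ?_ hb'.le
              exact Finset.sum_le_sum fun j _ =>
                mul_le_mul_of_nonneg_right (hqe k j) (sq_nonneg _)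
          _ = (b / (1 - γ)) * ∑ j, (π k j ω * dhat k j ω) * dhat k j ω := by
              rw [Finset.mul_sum, Finset.mul_sum]
              exact Finset.sum_congr rfl fun j _ => by ring
          _ ≤ (b / (1 - γ)) * ∑ j, D * dhat k j ω := by
              refine mul_le_mul_of_nonneg_left ?_ (by positivity)
              refine Finset.sum_le_sum fun j _ => ?_
              refine mul_le_mul_of_nonneg_right ?_ (hdhat0 k j ω)
              rw [hπdhat]
              split
              · exact hdD k j
              · exact hD
          _ = (b * D / (1 - γ)) * Tf k ω := by
              rw [hTfdef, Finset.mul_sum, Finset.mul_sum]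
              exact Finset.sum_congr rfl fun j _ => by ring
      -- combine
      have hmain2 : (γ / p) * ∑ k : Fin K, y k n ω ≤ Real.log N
          + (γ / (p * (1 - γ))) * (∑ k, Sf k ω)
          + (Real.exp 1 - 2) * (γ / p) ^ 2 * (b * D / (1 - γ)) * (∑ k, Tf k ω) := by
        have h1 : ∑ k : Fin K, ((γ / p) * A k + (Real.exp 1 - 2) * (γ / p) ^ 2 * B k)
            ≤ (γ / (p * (1 - γ))) * (∑ k, Sf k ω)
              + (Real.exp 1 - 2) * (γ / p) ^ 2 * (b * D / (1 - γ)) * (∑ k, Tf k ω) := by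
          rw [Finset.mul_sum, Finset.mul_sum, ← Finset.sum_add_distrib]
          refine Finset.sum_le_sum fun k _ => ?_
          have hA := hAb k
          have hB := hBb k
          have e1 : (γ / (p * (1 - γ))) * Sf k ω = (γ / p) * (Sf k ω / (1 - γ)) := by
            field_simp
          have e2 : (Real.exp 1 - 2) * (γ / p) ^ 2 * (b * D / (1 - γ)) * Tf k ω
              = (Real.exp 1 - 2) * (γ / p) ^ 2 * ((b * D / (1 - γ)) * Tf k ω) := by ring
          rw [e1, e2]
          have c1 : (0:ℝ) ≤ γ / p := by positivity
          have c2 : (0:ℝ) ≤ (Real.exp 1 - 2) * (γ / p) ^ 2 :=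
            mul_nonneg he2 (sq_nonneg _)
          exact add_le_add (mul_le_mul_of_nonneg_left hA c1)
            (mul_le_mul_of_nonneg_left hB c2)
        calc (γ / p) * ∑ k : Fin K, y k n ω = ∑ i ∈ Finset.range K, u i := hu_sum.symm
          _ ≤ Real.log N + ∑ i ∈ Finset.range K, v i := hlogle
          _ = Real.log N + ∑ k : Fin K,
              ((γ / p) * A k + (Real.exp 1 - 2) * (γ / p) ^ 2 * B k) := by rw [hv_sum]
          _ ≤ _ := by linarith [h1]
      -- rescale
      exact exp4_rescale hγ0 h1γ hp' hmain2
    -- integrate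
    have hL : Integrable (fun ω => (1 - γ) * ∑ k, y k n ω) μ :=
      (integrable_finset_sum _ fun k _ => (hy_int k n).1).const_mul _
    have hR : Integrable (fun ω => (1 - γ) * (p * Real.log N / γ) + (∑ k, Sf k ω)
        + (Real.exp 1 - 2) * (γ / p) * (b * D) * ∑ k, Tf k ω) μ := by
      refine Integrable.add ?_ ?_
      · exact (integrable_const _).add (integrable_finset_sum _ fun k _ => hSint k)
      · exact (integrable_finset_sum _ fun k _ => hTint k).const_mul _
    have hint := integral_mono_ae hL hR key
    have hLval : ∫ ω, (1 - γ) * ∑ k, y k n ω ∂μ = (1 - γ) * C n := by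
      rw [integral_const_mul, integral_finset_sum _ fun k _ => (hy_int k n).1, hCdef]
      congr 1
      exact Finset.sum_congr rfl fun k _ => (hy_int k n).2
    have hRval : ∫ ω, ((1 - γ) * (p * Real.log N / γ) + (∑ k, Sf k ω)
        + (Real.exp 1 - 2) * (γ / p) * (b * D) * ∑ k, Tf k ω) ∂μ
        = (1 - γ) * (p * Real.log N / γ) + G
          + (Real.exp 1 - 2) * (γ / p) * (b * D) * (∑ k : Fin K, ∑ j, d k j) := by
      have i3 : Integrable (fun ω => ∑ k, Sf k ω) μ :=
        integrable_finset_sum _ fun k _ => hSint k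
      have i1 : Integrable (fun ω => (1 - γ) * (p * Real.log N / γ) + (∑ k, Sf k ω)) μ :=
        (integrable_const _).add i3
      have i2 : Integrable
          (fun ω => (Real.exp 1 - 2) * (γ / p) * (b * D) * ∑ k, Tf k ω) μ :=
        (integrable_finset_sum _ fun k _ => hTint k).const_mul _
      rw [integral_add i1 i2, integral_add (integrable_const _) i3,
        integral_const, integral_const_mul,
        integral_finset_sum _ fun k _ => hTint k]
      simp only [measure_univ, probReal_univ, ENNReal.toReal_one, smul_eq_mul, one_mul]
      rw [hGval]
      congr 2
      exact Finset.sum_congr rfl fun k _ => hTval k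
    rw [hLval, hRval] at hint
    -- arithmetic finish
    have n0 : Fin N := ⟨0, by omega⟩
    have hdsum : (∑ k : Fin K, ∑ j, d k j) = (p / b) * C ⟨0, by omega⟩ := by
      have hC0 : C ⟨0, by omega⟩ = (b / p) * ∑ k : Fin K, ∑ j, d k j := by
        simp only [hCdef]
        rw [Finset.mul_sum]
        refine Finset.sum_congr rfl fun k _ => ?_
        rw [Finset.mul_sum]
        exact Finset.sum_congr rfl fun j _ => by rw [huniform k j]
      rw [hC0]
      field_simp
    have hquad : (Real.exp 1 - 2) * (γ / p) * (b * D) * (∑ k : Fin K, ∑ j, d k j)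
        ≤ (Real.exp 1 - 2) * γ * b * D * iSup C := by
      rw [hdsum]
      have e3 : (Real.exp 1 - 2) * (γ / p) * (b * D) * ((p / b) * C ⟨0, by omega⟩)
          = (Real.exp 1 - 2) * γ * D * C ⟨0, by omega⟩ := by
        field_simp
      rw [e3]
      have c3 : (0:ℝ) ≤ (Real.exp 1 - 2) * γ * D := by positivity
      calc (Real.exp 1 - 2) * γ * D * C ⟨0, by omega⟩
          ≤ (Real.exp 1 - 2) * γ * D * iSup C :=
            mul_le_mul_of_nonneg_left (hCle _) c3
        _ ≤ (Real.exp 1 - 2) * γ * b * D * iSup C := by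
            have hfac : (0:ℝ) ≤ (Real.exp 1 - 2) * γ * D * iSup C :=
              mul_nonneg c3 hCs0
            have hb1 : (1:ℝ) ≤ b := by exact_mod_cast hb
            nlinarith [mul_nonneg (sub_nonneg.mpr hb1) hfac]
    have h1 : γ * C n ≤ γ * iSup C := mul_le_mul_of_nonneg_left (hCle n) hγ0.le
    have h2 : (1 - γ) * (p * Real.log N / γ) ≤ p * Real.log N / γ := by
      have hx : 0 ≤ p * Real.log N / γ := by positivity
      nlinarith [mul_nonneg hγ0.le hx]
    have hexpand : ((Real.exp 1 - 2) * b * D + 1) * γ * iSup C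
        = (Real.exp 1 - 2) * γ * b * D * iSup C + γ * iSup C := by ring
    rw [hexpand]
    nlinarith [hint, hquad, h1, h2]
  have := ciSup_le main
  linarith [this]
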